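/- arXiv:2406.16541 — 6 statements merged into one kernel-verified Lean document; each statement's English description precedes it below -/
import Mathlib

section
/- Let T₁, T₂ be commuting bounded left-invertible operators on a Hilbert space H, with L₁ = (T₁*T₁)⁻¹T₁*. Then L₁T₂ = T₂L₁ if and only if ker T₁* is a reducing subspace for T₂ (i.e., ker T₁* is invariant under both T₂ and T₂*). -/
open ContinuousLinearMap

/-- For commuting bounded-below operators `T₁, T₂` on a Hilbert space,
with `L₁ = (T₁*T₁)⁻¹T₁*` (encoded via an inverse `S` of `T₁*T₁`), one has
`L₁T₂ = T₂L₁` iff `ker T₁*` is a reducing subspace for `T₂`. -/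
theorem stmt_1 {H : Type*} [NormedAddCommGroup H] [InnerProductSpace ℂ H] [CompleteSpace H]
    (T₁ T₂ S : H →L[ℂ] H)
    (hcomm : T₁ ∘L T₂ = T₂ ∘L T₁)
    (c₁ c₂ : ℝ) (hc₁ : 0 < c₁) (hc₂ : 0 < c₂)
    (hT₁ : ∀ h : H, c₁ * ‖h‖ ≤ ‖T₁ h‖) (hT₂ : ∀ h : H, c₂ * ‖h‖ ≤ ‖T₂ h‖)
    (hS₁ : S ∘L (adjoint T₁ ∘L T₁) = 1) (hS₂ : (adjoint T₁ ∘L T₁) ∘L S = 1) :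
    (S ∘L adjoint T₁) ∘L T₂ = T₂ ∘L (S ∘L adjoint T₁) ↔
      ((∀ x ∈ LinearMap.ker (adjoint T₁ : H →ₗ[ℂ] H), T₂ x ∈ LinearMap.ker (adjoint T₁ : H →ₗ[ℂ] H)) ∧
       (∀ x ∈ LinearMap.ker (adjoint T₁ : H →ₗ[ℂ] H), adjoint T₂ x ∈ LinearMap.ker (adjoint T₁ : H →ₗ[ℂ] H))) := by
  -- S is injective
  have hSinj : ∀ v : H, S v = 0 → v = 0 := by
    intro v hv
    have := congrArg (fun A => A v) hS₂
    simpa [ContinuousLinearMap.comp_apply, hv] using this.symm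
  -- L₁ T₁ = 1
  have hLT : ∀ a : H, S (adjoint T₁ (T₁ a)) = a := by
    intro a
    have := congrArg (fun A => A a) hS₁
    simpa [ContinuousLinearMap.comp_apply] using this
  -- adjoints commute
  have hadj : adjoint T₁ ∘L adjoint T₂ = adjoint T₂ ∘L adjoint T₁ := by
    rw [← adjoint_comp, ← adjoint_comp, hcomm]
  -- second conjunct holds unconditionally
  have hstar : ∀ x ∈ LinearMap.ker (adjoint T₁ : H →ₗ[ℂ] H), adjoint T₂ x ∈ LinearMap.ker (adjoint T₁ : H →ₗ[ℂ] H) := by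
    intro x hx
    rw [LinearMap.mem_ker, ContinuousLinearMap.coe_coe] at hx ⊢
    have := congrArg (fun A => A x) hadj
    simp only [ContinuousLinearMap.comp_apply] at this
    rw [this, hx, map_zero]
  constructor
  · intro h
    refine ⟨fun x hx => ?_, hstar⟩
    rw [LinearMap.mem_ker, ContinuousLinearMap.coe_coe] at hx ⊢
    have h1 := congrArg (fun A => A x) h
    simp only [ContinuousLinearMap.comp_apply] at h1
    simp only [hx, map_zero] at h1
    exact hSinj _ h1
  · rintro ⟨hker, -⟩
    -- range of T₁ is closed
    have hanti : AntilipschitzWith (⟨c₁, hc₁.le⟩ : NNReal)⁻¹ T₁ := by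
      refine ContinuousLinearMap.antilipschitz_of_bound T₁ ?_
      intro x
      change ‖x‖ ≤ c₁⁻¹ * ‖T₁ x‖
      rw [← div_eq_inv_mul, le_div_iff₀ hc₁]
      linarith [hT₁ x]
    have hclosed : IsClosed (Set.range T₁) := hanti.isClosed_range T₁.uniformContinuous
    set K : Submodule ℂ H := LinearMap.range (T₁ : H →ₗ[ℂ] H) with hK
    have hKclosed : IsClosed (K : Set H) := by
      have : (K : Set H) = Set.range T₁ := by
        ext y; simp [hK, LinearMap.mem_range]
      rw [this]; exact hclosed
    haveI : CompleteSpace K := hKclosed.completeSpace_coe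
    have hsup : K ⊔ Kᗮ = ⊤ := Submodule.sup_orthogonal_of_hasOrthogonalProjection
    -- membership in Kᗮ iff in ker of adjoint
    have hmem : ∀ b : H, b ∈ Kᗮ → adjoint T₁ b = 0 := by
      intro b hb
      refine ext_inner_right ℂ fun y => ?_
      rw [adjoint_inner_left, inner_zero_left]
      exact (Submodule.mem_orthogonal' K b).mp hb (T₁ y) ⟨y, rfl⟩
    ext x
    have hx : x ∈ K ⊔ Kᗮ := by rw [hsup]; trivial
    rcases Submodule.mem_sup.mp hx with ⟨u, hu, b, hb, rfl⟩
    rcases hu with ⟨a, rfl⟩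
    have hbker : adjoint T₁ b = 0 := hmem b hb
    have hT2b : adjoint T₁ (T₂ b) = 0 := hker b hbker
    have hcomm' : T₂ (T₁ a) = T₁ (T₂ a) := by
      have := congrArg (fun A => A a) hcomm
      simpa [ContinuousLinearMap.comp_apply] using this.symm
    simp only [ContinuousLinearMap.coe_coe, ContinuousLinearMap.comp_apply, map_add, hbker, hT2b, map_zero, add_zero,
      hcomm', hLT]
end

section
/- Let (T₁, …, Tₙ) be a left-inverse commuting tuple of bounded left-invertible operators on a Hilbert space H such that each Tᵢ is analytic, i.e., ⋂_{k≥0} Tᵢᵏ H = {0}. Then the joint kernel ⋂_{i=1}^n ker Tᵢ* is a nonzero closed subspace of H (provided H ≠ {0}). -/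
open ContinuousLinearMap

/-- Key lemma: if `T` is bounded below, `E` is a nonzero closed subspace invariant
under `T` and `adjoint T`, and `T` is analytic, then `ker (adjoint T) ⊓ E ≠ ⊥`. -/
lemma key_lemma {H : Type*} [NormedAddCommGroup H] [InnerProductSpace ℂ H] [CompleteSpace H]
    (T : H →L[ℂ] H) (c : ℝ) (hc : 0 < c) (hbb : ∀ h : H, c * ‖h‖ ≤ ‖T h‖)
    (E : Submodule ℂ H) (hEc : IsClosed (E : Set H)) (hEne : E ≠ ⊥)
    (hTE : ∀ x ∈ E, T x ∈ E) (hTsE : ∀ x ∈ E, adjoint T x ∈ E)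
    (hanalytic : (⨅ k : ℕ, LinearMap.range ((T ^ k : H →L[ℂ] H) : H →ₗ[ℂ] H)) = ⊥) :
    LinearMap.ker (adjoint T : H →ₗ[ℂ] H) ⊓ E ≠ ⊥ := by
  intro hbot
  haveI : CompleteSpace E := hEc.completeSpace_coe
  set M : Submodule ℂ H := Submodule.map (T : H →ₗ[ℂ] H) E with hM
  -- M is closed
  have hMclosed : IsClosed (M : Set H) := by
    set f : E →L[ℂ] H := T.comp E.subtypeL with hf
    have hbound : ∀ x : E, ‖x‖ ≤ (⟨c⁻¹, by positivity⟩ : NNReal) * ‖f x‖ := by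
      intro x
      have h1 : c * ‖(x : H)‖ ≤ ‖T (x : H)‖ := hbb x
      have h2 : ‖(x : E)‖ = ‖(x : H)‖ := rfl
      have h3 : ‖f x‖ = ‖T (x : H)‖ := rfl
      rw [h2, h3]
      calc ‖(x : H)‖ = c⁻¹ * (c * ‖(x : H)‖) := by field_simp
        _ ≤ c⁻¹ * ‖T (x : H)‖ := by
            apply mul_le_mul_of_nonneg_left h1 (by positivity)
        _ = (⟨c⁻¹, by positivity⟩ : NNReal) * ‖T (x : H)‖ := rfl
    have hanti := f.antilipschitz_of_bound hbound
    have hrange : Set.range f = (M : Set H) := by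
      ext y
      constructor
      · rintro ⟨x, rfl⟩
        exact ⟨x, x.2, rfl⟩
      · rintro ⟨x, hx, rfl⟩
        exact ⟨⟨x, hx⟩, rfl⟩
    have := hanti.isClosed_range f.uniformContinuous
    rwa [hrange] at this
  haveI : CompleteSpace M := hMclosed.completeSpace_coe
  have hME : M ≤ E := by
    rintro x ⟨y, hy, rfl⟩
    exact hTE y hy
  -- E ≤ M
  have hEM : E ≤ M := by
    intro x hx
    set p : H := (M.orthogonalProjection x : H) with hp
    have hyM : x - p ∈ Mᗮ := Submodule.sub_starProjection_mem_orthogonal (K := M) x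
    have hpE : p ∈ E := hME (M.orthogonalProjection x).2
    have hyE : x - p ∈ E := E.sub_mem hx hpE
    have hker : adjoint T (x - p) ∈ Eᗮ := by
      rw [Submodule.mem_orthogonal']
      intro u hu
      rw [adjoint_inner_left]
      exact (Submodule.mem_orthogonal' M _).mp hyM (T u) ⟨u, hu, rfl⟩
    have hmem : adjoint T (x - p) ∈ E := hTsE _ hyE
    have hz : adjoint T (x - p) = 0 := by
      have := (Submodule.orthogonal_disjoint E).le_bot ⟨hmem, hker⟩
      simpa using this
    have : x - p ∈ LinearMap.ker (adjoint T : H →ₗ[ℂ] H) ⊓ E := ⟨hz, hyE⟩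
    rw [hbot] at this
    have hxp : x - p = 0 := by simpa using this
    have : x = p := by linear_combination (norm := module) hxp
    rw [this]
    exact (M.orthogonalProjection x).2
  -- E ≤ range (T ^ k) for all k
  have hpow : ∀ k : ℕ, E ≤ LinearMap.range ((T ^ k : H →L[ℂ] H) : H →ₗ[ℂ] H) := by
    intro k
    induction k with
    | zero => simp [pow_zero]; intro x _; exact ⟨x, rfl⟩
    | succ k ih =>
      intro x hx
      obtain ⟨y, hy, rfl⟩ := hEM hx
      obtain ⟨z, hz⟩ := ih hy
      refine ⟨z, ?_⟩
      rw [pow_succ']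
      show T ((T ^ k) z) = T y
      exact congrArg T hz
  have : E ≤ ⨅ k : ℕ, LinearMap.range ((T ^ k : H →L[ℂ] H) : H →ₗ[ℂ] H) := le_iInf hpow
  rw [hanalytic] at this
  exact hEne (le_bot_iff.mp this)

/-- For a left-inverse commuting tuple `(T₁,…,Tₙ)` of bounded left-invertible
analytic operators on a nonzero Hilbert space `H`, the joint kernel `⋂ᵢ ker Tᵢ*` is nonzero.
Here `L i` is the left inverse `(Tᵢ*Tᵢ)⁻¹Tᵢ*`, characterized as the left inverse of `Tᵢ`
with `ker (L i) = ker Tᵢ*`. -/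
theorem stmt_2 {H : Type*} [NormedAddCommGroup H] [InnerProductSpace ℂ H] [CompleteSpace H]
    [Nontrivial H] {n : ℕ}
    (T L : Fin n → H →L[ℂ] H)
    (hcomm : ∀ i j, T i ∘L T j = T j ∘L T i)
    (c : Fin n → ℝ) (hc : ∀ i, 0 < c i) (hbb : ∀ i (h : H), c i * ‖h‖ ≤ ‖T i h‖)
    (hLinv : ∀ i, L i ∘L T i = 1)
    (hLker : ∀ i, LinearMap.ker (L i : H →ₗ[ℂ] H) = LinearMap.ker (adjoint (T i) : H →ₗ[ℂ] H))
    (hLic : ∀ i j, i ≠ j → L i ∘L T j = T j ∘L L i)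
    (hanalytic : ∀ i, (⨅ k : ℕ, LinearMap.range ((T i ^ k : H →L[ℂ] H) : H →ₗ[ℂ] H)) = ⊥) :
    (⨅ i, LinearMap.ker (adjoint (T i) : H →ₗ[ℂ] H)) ≠ ⊥ := by
  have hadj : ∀ i j, adjoint (T i) ∘L adjoint (T j) = adjoint (T j) ∘L adjoint (T i) := by
    intro i j
    rw [← adjoint_comp, ← adjoint_comp, hcomm]
  have main : ∀ S : Finset (Fin n),
      (⨅ i ∈ S, LinearMap.ker (adjoint (T i) : H →ₗ[ℂ] H)) ≠ ⊥ := by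
    intro S
    induction S using Finset.induction_on with
    | empty => simp
    | @insert j S hj ih =>
      set E : Submodule ℂ H := ⨅ i ∈ S, LinearMap.ker (adjoint (T i) : H →ₗ[ℂ] H) with hE
      have hmemE : ∀ x, x ∈ E ↔ ∀ i ∈ S, adjoint (T i) x = 0 := by
        intro x
        simp [hE, Submodule.mem_iInf, LinearMap.mem_ker]
      have hEclosed : IsClosed (E : Set H) := by
        have : (E : Set H) = ⋂ i ∈ S, (LinearMap.ker (adjoint (T i) : H →ₗ[ℂ] H) : Set H) := by
          ext x
          simp [hmemE x, LinearMap.mem_ker]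
        rw [this]
        exact isClosed_biInter fun i _ => ContinuousLinearMap.isClosed_ker (adjoint (T i))
      have hTE : ∀ x ∈ E, T j x ∈ E := by
        intro x hx
        rw [hmemE] at hx ⊢
        intro i hi
        have hij : i ≠ j := fun h => hj (h ▸ hi)
        have hx' : L i x = 0 := by
          have : x ∈ LinearMap.ker (L i : H →ₗ[ℂ] H) := by rw [hLker]; exact hx i hi
          exact this
        have hLT : L i (T j x) = T j (L i x) := by
          have := hLic i j hij
          calc L i (T j x) = (L i ∘L T j) x := rfl
            _ = (T j ∘L L i) x := by rw [this]
            _ = T j (L i x) := rfl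
        have : T j x ∈ LinearMap.ker (L i : H →ₗ[ℂ] H) := by
          simp [LinearMap.mem_ker, hLT, hx']
        rw [hLker] at this
        exact this
      have hTsE : ∀ x ∈ E, adjoint (T j) x ∈ E := by
        intro x hx
        rw [hmemE] at hx ⊢
        intro i hi
        calc adjoint (T i) (adjoint (T j) x) = (adjoint (T i) ∘L adjoint (T j)) x := rfl
          _ = (adjoint (T j) ∘L adjoint (T i)) x := by rw [hadj]
          _ = adjoint (T j) (adjoint (T i) x) := rfl
          _ = 0 := by rw [hx i hi, map_zero]
      have hkey := key_lemma (T j) (c j) (hc j) (hbb j) E hEclosed ih hTE hTsE (hanalytic j)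
      have : (⨅ i ∈ insert j S, LinearMap.ker (adjoint (T i) : H →ₗ[ℂ] H))
          = LinearMap.ker (adjoint (T j) : H →ₗ[ℂ] H) ⊓ E := by
        rw [hE]
        simp [iInf_or, iInf_inf_eq, iInf_iInf_eq_left]
      rw [this]
      exact hkey
  have := main Finset.univ
  simpa using this
end

section
/- Let (T₁, …, Tₙ) be a left-inverse commuting tuple of bounded left-invertible operators on a Hilbert space H. If each Tᵢ has the wandering subspace property (H = closed span of {Tᵢᵏ(ker Tᵢ*) : k ≥ 0}), then the tuple has the joint wandering subspace property: H equals the closed span of {T₁^{k₁}⋯Tₙ^{kₙ} W : (k₁,…,kₙ) ∈ ℤ_{≥0}ⁿ}, where W = ⋂_{i=1}^n ker Tᵢ*. -/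
open ContinuousLinearMap

noncomputable section Aux

lemma aux_prod {M : Type*} [Monoid M] : ∀ {n : ℕ} (T : Fin n → M) (k : Fin n → ℕ)
    (j : Fin n) (a : ℕ), (∀ p q, Commute (T p) (T q)) →
    (List.ofFn fun i => T i ^ (k i + (if i = j then a else 0))).prod
      = T j ^ a * (List.ofFn fun i => T i ^ k i).prod := by
  intro n
  induction n with
  | zero => exact fun T k j a _ => j.elim0
  | succ n ih =>
    intro T k j a hc
    rw [List.ofFn_succ, List.ofFn_succ, List.prod_cons, List.prod_cons]
    induction j using Fin.cases with
    | zero =>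
      simp only [Fin.succ_ne_zero, if_false, ite_true, ite_false, eq_self_iff_true, add_zero,
        if_pos]
      rw [add_comm (k 0) a, pow_add, mul_assoc]
    | succ j' =>
      have htail : (List.ofFn fun i : Fin n =>
          T i.succ ^ (k i.succ + if i.succ = j'.succ then a else 0)).prod
          = T j'.succ ^ a * (List.ofFn fun i : Fin n => T i.succ ^ k i.succ).prod := by
        have := ih (fun i => T i.succ) (fun i => k i.succ) j' a (fun p q => hc _ _)
        simpa [Fin.succ_inj] using this
      rw [if_neg (Fin.succ_ne_zero j').symm, add_zero, htail,
        ← mul_assoc, ← mul_assoc, ((hc j'.succ 0).pow_pow a (k 0))]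

variable {H : Type*} [NormedAddCommGroup H] [InnerProductSpace ℂ H] [CompleteSpace H] {n : ℕ}

/-- Product operator `T₁^{k₁} ⋯ Tₙ^{kₙ}`. -/
abbrev Ee (T : Fin n → H →L[ℂ] H) (k : Fin n → ℕ) : H →L[ℂ] H :=
  (List.ofFn fun i => T i ^ k i).prod

/-- Joint wandering subspace `W = ⋂ ker Tᵢ*`. -/
abbrev Ww (T : Fin n → H →L[ℂ] H) : Submodule ℂ H :=
  ⨅ i, LinearMap.ker (adjoint (T i) : H →ₗ[ℂ] H)

/-- Partial joint span: only the first `m` coordinates may have nonzero exponents. -/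
abbrev Sj (T : Fin n → H →L[ℂ] H) (m : ℕ) : Submodule ℂ H :=
  ⨆ (k : Fin n → ℕ) (_ : ∀ i : Fin n, m ≤ (i : ℕ) → k i = 0), Submodule.map (Ee T k : H →ₗ[ℂ] H) (Ww T)

/-- Partial kernel intersection. -/
abbrev Kt (T : Fin n → H →L[ℂ] H) (i₀ : Fin n) (m t : ℕ) : Submodule ℂ H :=
  LinearMap.ker (adjoint (T i₀) : H →ₗ[ℂ] H) ⊓
    ⨅ (i : Fin n) (_ : m + 1 ≤ (i : ℕ)) (_ : (i : ℕ) < t), LinearMap.ker (adjoint (T i) : H →ₗ[ℂ] H)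

lemma mem_Kt (T : Fin n → H →L[ℂ] H) (i₀ : Fin n) (m t : ℕ) (y : H) :
    y ∈ Kt T i₀ m t ↔ adjoint (T i₀) y = 0 ∧
      ∀ i : Fin n, m + 1 ≤ (i : ℕ) → (i : ℕ) < t → adjoint (T i) y = 0 := by
  simp [Kt, Submodule.mem_inf, Submodule.mem_iInf, LinearMap.mem_ker]

lemma map_closure_le (f : H →L[ℂ] H) (p : Submodule ℂ H) :
    Submodule.map (f : H →ₗ[ℂ] H) p.topologicalClosure ≤ (Submodule.map (f : H →ₗ[ℂ] H) p).topologicalClosure := by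
  rintro y ⟨z, hz, rfl⟩
  have hz' : z ∈ closure (p : Set H) := by
    rwa [← Submodule.topologicalClosure_coe]
  have : f z ∈ closure (f '' (p : Set H)) :=
    image_closure_subset_closure_image f.continuous ⟨z, hz', rfl⟩
  rwa [← ContinuousLinearMap.coe_coe, ← Submodule.map_coe, ← Submodule.topologicalClosure_coe] at this

end Aux

/-- A left-inverse commuting tuple of bounded left-invertible operators
in which each `Tᵢ` has the (individual) wandering subspace property has the joint
wandering subspace property with wandering subspace `W = ⋂ᵢ ker Tᵢ*`. -/
theorem stmt_3 {H : Type*} [NormedAddCommGroup H] [InnerProductSpace ℂ H] [CompleteSpace H]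
    {n : ℕ}
    (T L : Fin n → H →L[ℂ] H)
    (hcomm : ∀ i j, T i ∘L T j = T j ∘L T i)
    (c : Fin n → ℝ) (hc : ∀ i, 0 < c i) (hbb : ∀ i (h : H), c i * ‖h‖ ≤ ‖T i h‖)
    (hLinv : ∀ i, L i ∘L T i = 1)
    (hLker : ∀ i, LinearMap.ker (L i : H →ₗ[ℂ] H) = LinearMap.ker (adjoint (T i) : H →ₗ[ℂ] H))
    (hLic : ∀ i j, i ≠ j → L i ∘L T j = T j ∘L L i)
    (hindiv : ∀ i,
      (⨆ k : ℕ, Submodule.map ((T i ^ k : H →L[ℂ] H) : H →ₗ[ℂ] H)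
        (LinearMap.ker (adjoint (T i) : H →ₗ[ℂ] H))).topologicalClosure = ⊤) :
    (⨆ k : Fin n → ℕ, Submodule.map (((List.ofFn fun i => T i ^ k i).prod : H →L[ℂ] H) : H →ₗ[ℂ] H)
      (⨅ i, LinearMap.ker (adjoint (T i) : H →ₗ[ℂ] H))).topologicalClosure = ⊤ := by
  classical
  -- pointwise left-inverse property
  have hLT : ∀ i (y : H), L i (T i y) = y := by
    intro i y
    have := DFunLike.congr_fun (hLinv i) y
    simpa using this
  have hkerL : ∀ i (x : H), adjoint (T i) x = 0 → L i x = 0 := by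
    intro i x hx
    have : x ∈ LinearMap.ker (L i : H →ₗ[ℂ] H) := by
      rw [hLker i]; exact LinearMap.mem_ker.2 hx
    exact this
  -- the (oblique = orthogonal) projections onto ker Tᵢ*
  set P : Fin n → (H →L[ℂ] H) := fun i => 1 - T i ∘L L i with hPdef
  have hP_apply : ∀ i (x : H), P i x = x - T i (L i x) := fun i x => rfl
  have hP_ker : ∀ i (x : H), adjoint (T i) (P i x) = 0 := by
    intro i x
    have h1 : P i x ∈ LinearMap.ker (L i : H →ₗ[ℂ] H) := by
      simp [LinearMap.mem_ker, hP_apply, map_sub, hLT]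
    rw [hLker i] at h1
    exact h1
  have hP_fix : ∀ i (x : H), adjoint (T i) x = 0 → P i x = x := by
    intro i x hx
    simp [hP_apply, hkerL i x hx]
  -- P i commutes with T j for i ≠ j
  have hPT : ∀ i j, i ≠ j → (P i) ∘L (T j) = (T j) ∘L (P i) := by
    intro i j hij
    have h1 : (T i ∘L L i) ∘L T j = T j ∘L (T i ∘L L i) := by
      calc (T i ∘L L i) ∘L T j = T i ∘L (L i ∘L T j) := by rw [comp_assoc]
      _ = T i ∘L (T j ∘L L i) := by rw [hLic i j hij]
      _ = (T i ∘L T j) ∘L L i := by rw [comp_assoc]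
      _ = (T j ∘L T i) ∘L L i := by rw [hcomm i j]
      _ = T j ∘L (T i ∘L L i) := by rw [comp_assoc]
    simp only [hPdef]
    rw [sub_comp, comp_sub, one_def, id_comp, comp_id, h1]
  -- P i is self-adjoint
  have hP_sa : ∀ i (x y : H), (inner ℂ (P i x) y : ℂ) = inner ℂ x (P i y) := by
    intro i x y
    have hy : y = P i y + T i (L i y) := by simp [hP_apply]
    have hx : x = P i x + T i (L i x) := by simp [hP_apply]
    have h1 : (inner ℂ (P i x) (T i (L i y)) : ℂ) = 0 := by
      rw [← ContinuousLinearMap.adjoint_inner_left, hP_ker, inner_zero_left]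
    have h2 : (inner ℂ (T i (L i x)) (P i y) : ℂ) = 0 := by
      rw [← ContinuousLinearMap.adjoint_inner_right, hP_ker, inner_zero_right]
    have e1 : (inner ℂ (P i x) y : ℂ) = inner ℂ (P i x) (P i y) := by
      conv_lhs => rw [hy]
      rw [inner_add_right, h1, add_zero]
    have e2 : (inner ℂ x (P i y) : ℂ) = inner ℂ (P i x) (P i y) := by
      conv_lhs => rw [hx]
      rw [inner_add_left, h2, add_zero]
    rw [e1, e2]
  -- P i commutes with adjoint (T j) for i ≠ j
  have hPA : ∀ i j, i ≠ j → ∀ x : H, adjoint (T j) (P i x) = P i (adjoint (T j) x) := by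
    intro i j hij x
    apply ext_inner_right ℂ
    intro y
    have hPTy : P i (T j y) = T j (P i y) := by
      have := DFunLike.congr_fun (hPT i j hij) y
      simpa using this
    calc (inner ℂ (adjoint (T j) (P i x)) y : ℂ) = inner ℂ (P i x) (T j y) :=
          ContinuousLinearMap.adjoint_inner_left _ _ _
    _ = inner ℂ x (P i (T j y)) := hP_sa i x (T j y)
    _ = inner ℂ x (T j (P i y)) := by rw [hPTy]
    _ = inner ℂ (adjoint (T j) x) (P i y) :=
          (ContinuousLinearMap.adjoint_inner_left _ _ _).symm
    _ = inner ℂ (P i (adjoint (T j) x)) y := (hP_sa i _ _).symm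
  -- P i commutes with powers of T j
  have hPTpow : ∀ i j, i ≠ j → ∀ (a : ℕ) (w : H),
      P i ((T j ^ a) w) = (T j ^ a) (P i w) := by
    intro i j hij a w
    have hcij : Commute (P i) (T j) := hPT i j hij
    have := DFunLike.congr_fun (hcij.pow_right a) w
    simpa [ContinuousLinearMap.mul_apply] using this
  -- commuting as Commute instances
  have hTcomm : ∀ p q, Commute (T p) (T q) := fun p q => hcomm p q
  -- E of shifted exponent
  have hEadd : ∀ (k : Fin n → ℕ) (j : Fin n) (a : ℕ),
      Ee T (fun i => k i + if i = j then a else 0) = T j ^ a * Ee T k :=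
    fun k j a => aux_prod T k j a hTcomm
  have hE0 : Ee T (fun _ => 0) = 1 := by
    simp [Ee, List.ofFn_const]
  -- monotonicity of Sj in m
  have hSmono : ∀ {m m' : ℕ}, m ≤ m' → Sj T m ≤ Sj T m' := by
    intro m m' hmm
    refine iSup_le fun k => iSup_le fun hk => ?_
    exact le_iSup_of_le k (le_iSup_of_le (fun i hi => hk i (hmm.trans hi)) le_rfl)
  -- the main induction
  have main : ∀ m : ℕ, ∀ x : H, (∀ i : Fin n, m ≤ (i : ℕ) → adjoint (T i) x = 0) →
      x ∈ (Sj T m).topologicalClosure := by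
    intro m
    induction m with
    | zero =>
      intro x hx
      have hxW : x ∈ Ww T := by
        simp only [Ww, Submodule.mem_iInf]
        exact fun i => LinearMap.mem_ker.2 (hx i (Nat.zero_le _))
      have hmem : x ∈ Submodule.map (Ee T (fun _ => 0) : H →ₗ[ℂ] H) (Ww T) := by
        refine ⟨x, hxW, ?_⟩
        rw [hE0]; rfl
      have hle : Submodule.map (Ee T (fun _ => 0) : H →ₗ[ℂ] H) (Ww T) ≤ Sj T 0 :=
        le_iSup_of_le (fun _ => 0) (le_iSup_of_le (fun i _ => rfl) le_rfl)
      exact (Sj T 0).le_topologicalClosure (hle hmem)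
    | succ m ih =>
      intro x hx
      by_cases hmn : m < n
      · -- main case
        set i₀ : Fin n := ⟨m, hmn⟩ with hi₀
        -- inner induction: project into more and more kernels
        have inner_ind : ∀ t : ℕ, m + 1 ≤ t →
            x ∈ (⨆ a : ℕ, Submodule.map ((T i₀ ^ a : H →L[ℂ] H) : H →ₗ[ℂ] H) (Kt T i₀ m t)).topologicalClosure := by
          intro t ht
          induction t, ht using Nat.le_induction with
          | base =>
            have h1 : LinearMap.ker (adjoint (T i₀) : H →ₗ[ℂ] H) ≤ Kt T i₀ m (m + 1) := by
              refine le_inf le_rfl (le_iInf fun i => le_iInf fun h1 => le_iInf fun h2 => ?_)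
              exact absurd h2 (by omega)
            have h2 : (⨆ a : ℕ, Submodule.map ((T i₀ ^ a : H →L[ℂ] H) : H →ₗ[ℂ] H) (LinearMap.ker (adjoint (T i₀) : H →ₗ[ℂ] H)))
                ≤ ⨆ a : ℕ, Submodule.map ((T i₀ ^ a : H →L[ℂ] H) : H →ₗ[ℂ] H) (Kt T i₀ m (m + 1)) :=
              iSup_mono fun a => Submodule.map_mono h1
            have h3 : (⊤ : Submodule ℂ H)
                ≤ (⨆ a : ℕ, Submodule.map ((T i₀ ^ a : H →L[ℂ] H) : H →ₗ[ℂ] H) (Kt T i₀ m (m + 1))).topologicalClosure := by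
              rw [← hindiv i₀]
              exact Submodule.topologicalClosure_mono h2
            exact h3 Submodule.mem_top
          | succ t ht iht =>
            by_cases htn : t < n
            · set j : Fin n := ⟨t, htn⟩ with hj
              have hji : j ≠ i₀ := by
                intro hji
                have := congrArg Fin.val hji
                simp only [hj, hi₀] at this
                omega
              have hxj : adjoint (T j) x = 0 := hx j ht
              have hfix : P j x = x := hP_fix j x hxj
              have hmap : Submodule.map (P j : H →ₗ[ℂ] H) (⨆ a : ℕ, Submodule.map ((T i₀ ^ a : H →L[ℂ] H) : H →ₗ[ℂ] H) (Kt T i₀ m t))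
                  ≤ ⨆ a : ℕ, Submodule.map ((T i₀ ^ a : H →L[ℂ] H) : H →ₗ[ℂ] H) (Kt T i₀ m (t + 1)) := by
                rw [Submodule.map_iSup]
                refine iSup_le fun a => le_iSup_of_le a ?_
                rintro y ⟨z, ⟨w, hw, rfl⟩, rfl⟩
                refine ⟨P j w, ?_, (hPTpow j i₀ hji a w).symm⟩
                simp only [SetLike.mem_coe] at hw ⊢
                rw [mem_Kt] at hw ⊢
                obtain ⟨hw0, hwrest⟩ := hw
                refine ⟨?_, ?_⟩
                · rw [hPA j i₀ hji, hw0, map_zero]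
                · intro i hi1 hi2
                  by_cases hit : (i : ℕ) < t
                  · have hjt : (j : ℕ) = t := rfl
                    have hij : j ≠ i := by
                      intro hji'
                      have hvv := congrArg Fin.val hji'
                      omega
                    rw [hPA j i hij, hwrest i hi1 hit, map_zero]
                  · have hit' : (i : ℕ) = t := by omega
                    have hij : i = j := Fin.ext (by simp [hj, hit'])
                    rw [hij]
                    exact hP_ker j w
              have hx1 : x ∈ closure ((⨆ a : ℕ,
                  Submodule.map ((T i₀ ^ a : H →L[ℂ] H) : H →ₗ[ℂ] H) (Kt T i₀ m t) : Submodule ℂ H) : Set H) := by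
                rwa [← Submodule.topologicalClosure_coe]
              have hx2 : P j x ∈ closure ((P j) ''
                  ((⨆ a : ℕ, Submodule.map ((T i₀ ^ a : H →L[ℂ] H) : H →ₗ[ℂ] H) (Kt T i₀ m t) : Submodule ℂ H) : Set H)) :=
                image_closure_subset_closure_image (P j).continuous ⟨x, hx1, rfl⟩
              rw [hfix] at hx2
              rw [← ContinuousLinearMap.coe_coe (P j), ← Submodule.map_coe] at hx2
              have hx3 : x ∈ closure ((⨆ a : ℕ,
                  Submodule.map ((T i₀ ^ a : H →L[ℂ] H) : H →ₗ[ℂ] H) (Kt T i₀ m (t + 1)) : Submodule ℂ H) : Set H) :=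
                closure_mono hmap hx2
              rwa [← Submodule.topologicalClosure_coe] at hx3
            · -- t ≥ n : vacuous extension
              have hKle : Kt T i₀ m t ≤ Kt T i₀ m (t + 1) := by
                intro y hy
                rw [mem_Kt] at hy ⊢
                obtain ⟨hy0, hyrest⟩ := hy
                refine ⟨hy0, fun i hi1 hi2 => ?_⟩
                have : (i : ℕ) < n := i.isLt
                exact hyrest i hi1 (by omega)
              exact Submodule.topologicalClosure_mono
                (iSup_mono fun a => Submodule.map_mono hKle) iht
        have hxn := inner_ind n hmn
        -- Kt at n is contained in the closure of Sj T m
        have hKn : Kt T i₀ m n ≤ (Sj T m).topologicalClosure := by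
          intro y hy
          rw [mem_Kt] at hy
          obtain ⟨hy0, hyrest⟩ := hy
          refine ih y fun i hi => ?_
          rcases Nat.eq_or_lt_of_le hi with heq | hlt
          · have : i = i₀ := Fin.ext (by simp [hi₀, heq.symm])
            rw [this]; exact hy0
          · exact hyrest i hlt i.isLt
        -- conclude
        have hVle : (⨆ a : ℕ, Submodule.map ((T i₀ ^ a : H →L[ℂ] H) : H →ₗ[ℂ] H) (Kt T i₀ m n))
            ≤ (Sj T (m + 1)).topologicalClosure := by
          refine iSup_le fun a => ?_
          refine le_trans (Submodule.map_mono hKn) ?_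
          refine le_trans (map_closure_le (T i₀ ^ a) (Sj T m)) ?_
          refine Submodule.topologicalClosure_mono ?_
          simp only [Sj]
          rw [Submodule.map_iSup]
          refine iSup_le fun k => ?_
          rw [Submodule.map_iSup]
          refine iSup_le fun hk => ?_
          have hkey : Submodule.map ((T i₀ ^ a : H →L[ℂ] H) : H →ₗ[ℂ] H) (Submodule.map (Ee T k : H →ₗ[ℂ] H) (Ww T))
              = Submodule.map (Ee T (fun i => k i + if i = i₀ then a else 0) : H →ₗ[ℂ] H) (Ww T) := by
            rw [hEadd k i₀ a]
            ext y
            simp only [Submodule.mem_map, ContinuousLinearMap.mul_apply]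
            constructor
            · rintro ⟨z, ⟨w, hw, rfl⟩, rfl⟩
              exact ⟨w, hw, rfl⟩
            · rintro ⟨w, hw, rfl⟩
              exact ⟨Ee T k w, ⟨w, hw, rfl⟩, rfl⟩
          rw [hkey]
          refine le_iSup_of_le (fun i => k i + if i = i₀ then a else 0)
            (le_iSup_of_le ?_ le_rfl)
          intro i hi
          have h1 : k i = 0 := hk i (by omega)
          have h2 : i ≠ i₀ := by
            intro hh
            have := congrArg Fin.val hh
            simp only [hi₀] at this
            omega
          simp [h1, h2]
        have hfin := Submodule.topologicalClosure_minimal _ hVle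
          (Submodule.isClosed_topologicalClosure (Sj T (m + 1)))
        exact hfin hxn
      · -- vacuous case m ≥ n
        have hx' : ∀ i : Fin n, m ≤ (i : ℕ) → adjoint (T i) x = 0 := by
          intro i hi
          exact absurd (lt_of_le_of_lt hi i.isLt) hmn
        exact Submodule.topologicalClosure_mono (hSmono (Nat.le_succ m)) (ih x hx')
  -- conclude the theorem
  rw [eq_top_iff]
  intro x _
  have hmain := main n x (fun i hi => absurd hi (Nat.not_le.2 i.isLt))
  have hle : Sj T n ≤ ⨆ k : Fin n → ℕ, Submodule.map (Ee T k : H →ₗ[ℂ] H) (Ww T) :=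
    iSup_le fun k => iSup_le fun _ => le_iSup (fun k => Submodule.map (Ee T k : H →ₗ[ℂ] H) (Ww T)) k
  exact Submodule.topologicalClosure_mono hle hmain
end

section
/- Let (T₁, …, Tₙ) be a left-inverse commuting tuple of bounded left-invertible operators on a Hilbert space H with the joint wandering subspace property with wandering subspace W = ⋂ᵢ ker Tᵢ*. Then each Tⱼ individually has the wandering subspace property: H = closed span of {Tⱼᵏ(ker Tⱼ*) : k ≥ 0}. -/
open ContinuousLinearMap

/-- A left-inverse commuting tuple of bounded left-invertible operators with
the joint wandering subspace property (with wandering subspace `W = ⋂ᵢ ker Tᵢ*`) has the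
individual wandering subspace property for each `Tⱼ`. -/
theorem stmt_4 {H : Type*} [NormedAddCommGroup H] [InnerProductSpace ℂ H] [CompleteSpace H]
    {n : ℕ}
    (T L : Fin n → H →L[ℂ] H)
    (hcomm : ∀ i j, T i ∘L T j = T j ∘L T i)
    (c : Fin n → ℝ) (hc : ∀ i, 0 < c i) (hbb : ∀ i (h : H), c i * ‖h‖ ≤ ‖T i h‖)
    (hLinv : ∀ i, L i ∘L T i = 1)
    (hLker : ∀ i, LinearMap.ker (L i : H →ₗ[ℂ] H) = LinearMap.ker (adjoint (T i) : H →ₗ[ℂ] H))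
    (hLic : ∀ i j, i ≠ j → L i ∘L T j = T j ∘L L i)
    (hjoint : (⨆ k : Fin n → ℕ, Submodule.map (((List.ofFn fun i => T i ^ k i).prod : H →L[ℂ] H) : H →ₗ[ℂ] H)
      (⨅ i, LinearMap.ker (adjoint (T i) : H →ₗ[ℂ] H))).topologicalClosure = ⊤) :
    ∀ j, (⨆ k : ℕ, Submodule.map ((T j ^ k : H →L[ℂ] H) : H →ₗ[ℂ] H)
      (LinearMap.ker (adjoint (T j) : H →ₗ[ℂ] H))).topologicalClosure = ⊤ := by
  intro j
  set K := LinearMap.ker (adjoint (T j) : H →ₗ[ℂ] H) with hKdef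
  set S := ⨆ k : ℕ, Submodule.map ((T j ^ k : H →L[ℂ] H) : H →ₗ[ℂ] H) K with hSdef
  have hKS : K ≤ S := by
    intro x hx
    exact le_iSup (fun k => Submodule.map ((T j ^ k : H →L[ℂ] H) : H →ₗ[ℂ] H) K) 0 ⟨x, hx, by simp⟩
  -- K is invariant under T i for i ≠ j
  have hKinv : ∀ i, i ≠ j → ∀ z ∈ K, T i z ∈ K := by
    intro i hij z hz
    rw [hKdef, ← hLker] at hz ⊢
    have h := hLic j i (fun h => hij h.symm)
    have := DFunLike.congr_fun h z
    simp only [coe_comp', Function.comp_apply] at this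
    simp only [LinearMap.mem_ker, ContinuousLinearMap.coe_coe] at hz ⊢
    rw [show (L j) (T i z) = T i (L j z) from this, hz, map_zero]
  -- S is invariant under every T i
  have hinv : ∀ i, ∀ x ∈ S, T i x ∈ S := by
    intro i x hx
    refine Submodule.iSup_induction (motive := fun x => T i x ∈ S)
      (fun k => Submodule.map ((T j ^ k : H →L[ℂ] H) : H →ₗ[ℂ] H) K) hx ?_ (by simp) ?_
    · rintro k _ ⟨z, hz, rfl⟩
      by_cases hij : i = j
      · subst hij
        have he : T i ((T i ^ k) z) = (T i ^ (k + 1)) z := by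
          rw [pow_succ', ContinuousLinearMap.mul_apply]
        rw [ContinuousLinearMap.coe_coe, he]
        exact le_iSup (fun k => Submodule.map ((T i ^ k : H →L[ℂ] H) : H →ₗ[ℂ] H) K) (k + 1) ⟨z, hz, rfl⟩
      · have hcom : T i ((T j ^ k) z) = (T j ^ k) (T i z) := by
          have h : T i * T j ^ k = T j ^ k * T i :=
            ((show Commute (T i) (T j) from hcomm i j).pow_right k)
          have := DFunLike.congr_fun h z
          simpa [mul_apply] using this
        rw [ContinuousLinearMap.coe_coe, hcom]
        exact le_iSup (fun k => Submodule.map ((T j ^ k : H →L[ℂ] H) : H →ₗ[ℂ] H) K) k ⟨T i z, hKinv i hij z hz, rfl⟩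
    · intro a b ha hb
      simpa [map_add] using Submodule.add_mem _ ha hb
  have hpow : ∀ i (m : ℕ), ∀ x ∈ S, (T i ^ m) x ∈ S := by
    intro i m
    induction m with
    | zero => intro x hx; simpa using hx
    | succ m ih =>
      intro x hx
      have h1 : T i x ∈ S := hinv i x hx
      have := ih _ h1
      have he : (T i ^ (m + 1)) x = (T i ^ m) (T i x) := by
        rw [pow_succ, ContinuousLinearMap.mul_apply]
      rw [he]; exact this
  have hprod : ∀ l : List (H →L[ℂ] H), (∀ f ∈ l, ∀ x ∈ S, f x ∈ S) →
      ∀ x ∈ S, l.prod x ∈ S := by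
    intro l
    induction l with
    | nil => intro _ x hx; simpa using hx
    | cons a t ih =>
      intro h x hx
      have h1 := ih (fun f hf => h f (List.mem_cons_of_mem a hf)) x hx
      have h2 := h a List.mem_cons_self _ h1
      simpa [List.prod_cons, mul_apply] using h2
  have hle : (⨆ k : Fin n → ℕ, Submodule.map (((List.ofFn fun i => T i ^ k i).prod : H →L[ℂ] H) : H →ₗ[ℂ] H)
      (⨅ i, LinearMap.ker (adjoint (T i) : H →ₗ[ℂ] H))) ≤ S := by
    refine iSup_le fun k => ?_
    rintro _ ⟨z, hz, rfl⟩
    have hzK : z ∈ K := by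
      rw [hKdef]
      exact (Submodule.mem_iInf _).1 hz j
    refine hprod _ ?_ z (hKS hzK)
    intro f hf
    rcases List.mem_ofFn.1 hf with ⟨i, rfl⟩
    exact hpow i (k i)
  have hmono := Submodule.topologicalClosure_mono hle
  rw [hjoint] at hmono
  exact top_le_iff.1 hmono
end

section
/- Let T₁, T₂ be commuting bounded operators on a Hilbert space H such that ker T₁* is a T₂-reducing subspace, and suppose T₂ restricted to ker T₁* is analytic (⋂_{k≥0} T₂ᵏ(ker T₁*) = {0}) and bounded below with ker T₁* ≠ {0}. Then ker T₁* ∩ ker T₂* ≠ {0}. -/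
open ContinuousLinearMap

/-- If `T₁, T₂` commute, `ker T₁*` is `T₂`-reducing, `T₂|_{ker T₁*}` is
analytic and bounded below, and `ker T₁* ≠ {0}`, then `ker T₁* ∩ ker T₂* ≠ {0}`. -/
theorem stmt_5 {H : Type*} [NormedAddCommGroup H] [InnerProductSpace ℂ H] [CompleteSpace H]
    (T₁ T₂ : H →L[ℂ] H)
    (hcomm : T₁ ∘L T₂ = T₂ ∘L T₁)
    (hred₁ : ∀ x ∈ LinearMap.ker (adjoint T₁ : H →ₗ[ℂ] H), T₂ x ∈ LinearMap.ker (adjoint T₁ : H →ₗ[ℂ] H))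
    (hred₂ : ∀ x ∈ LinearMap.ker (adjoint T₁ : H →ₗ[ℂ] H), adjoint T₂ x ∈ LinearMap.ker (adjoint T₁ : H →ₗ[ℂ] H))
    (hanalytic : (⨅ k : ℕ, Submodule.map ((T₂ ^ k : H →L[ℂ] H) : H →ₗ[ℂ] H) (LinearMap.ker (adjoint T₁ : H →ₗ[ℂ] H))) = ⊥)
    (c : ℝ) (hc : 0 < c)
    (hbb : ∀ x ∈ LinearMap.ker (adjoint T₁ : H →ₗ[ℂ] H), c * ‖x‖ ≤ ‖T₂ x‖)
    (hker : LinearMap.ker (adjoint T₁ : H →ₗ[ℂ] H) ≠ ⊥) :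
    LinearMap.ker (adjoint T₁ : H →ₗ[ℂ] H) ⊓ LinearMap.ker (adjoint T₂ : H →ₗ[ℂ] H) ≠ ⊥ := by
  set W := LinearMap.ker (adjoint T₁ : H →ₗ[ℂ] H) with hW
  have hWclosed : IsClosed (W : Set H) := isClosed_ker (adjoint T₁)
  haveI : CompleteSpace W := hWclosed.completeSpace_coe
  set M : Submodule ℂ H := Submodule.map (T₂ : H →ₗ[ℂ] H) W with hM
  have hMleW : M ≤ W := by
    rintro y ⟨x, hx, rfl⟩
    exact hred₁ x hx
  -- M is closed
  set f : W →L[ℂ] H := T₂.comp W.subtypeL with hf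
  have halip : AntilipschitzWith (c.toNNReal⁻¹) f := by
    apply AddMonoidHomClass.antilipschitz_of_bound
    intro x
    have := hbb x x.2
    rw [NNReal.coe_inv, Real.coe_toNNReal _ hc.le, inv_mul_eq_div, le_div_iff₀ hc]
    simpa [mul_comm, hf] using this
  have hMclosed : IsClosed (M : Set H) := by
    have h1 : Set.range f = (M : Set H) := by
      ext y
      simp only [hf, Set.mem_range, SetLike.mem_coe, hM, Submodule.mem_map]
      constructor
      · rintro ⟨x, rfl⟩
        exact ⟨x, x.2, rfl⟩
      · rintro ⟨x, hx, rfl⟩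
        exact ⟨⟨x, hx⟩, rfl⟩
    rw [← h1]
    exact halip.isClosed_range f.uniformContinuous
  by_cases hMeq : M = W
  · -- then all iterates map W onto W, contradicting analyticity
    exfalso
    apply hker
    rw [← le_bot_iff, ← hanalytic]
    refine le_iInf fun k => ?_
    induction k with
    | zero =>
      rintro x hx
      exact ⟨x, hx, rfl⟩
    | succ n ih =>
      have : Submodule.map ((T₂ ^ (n + 1) : H →L[ℂ] H) : H →ₗ[ℂ] H) W = Submodule.map ((T₂ ^ n : H →L[ℂ] H) : H →ₗ[ℂ] H) M := by
        ext y
        simp only [Submodule.mem_map, hM]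
        constructor
        · rintro ⟨x, hx, rfl⟩
          exact ⟨T₂ x, ⟨x, hx, rfl⟩, by rw [pow_succ]; rfl⟩
        · rintro ⟨m, ⟨x, hx, rfl⟩, rfl⟩
          exact ⟨x, hx, by rw [pow_succ]; rfl⟩
      rw [hMeq] at this
      rw [this]
      exact ih
  · -- proper closed subspace: pick z ∈ W orthogonal to M
    have hMlt : M < W := lt_of_le_of_ne hMleW hMeq
    obtain ⟨x, hxW, hxM⟩ := SetLike.exists_of_lt hMlt
    haveI : CompleteSpace M := hMclosed.completeSpace_coe
    set z : H := x - (Submodule.orthogonalProjectionOnto M x : H) with hz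
    have hzW : z ∈ W := W.sub_mem hxW (hMleW (Submodule.orthogonalProjectionOnto M x).2)
    have hzorth : z ∈ Mᗮ := Submodule.sub_starProjection_mem_orthogonal (K := M) x
    have hzne : z ≠ 0 := by
      intro h
      apply hxM
      have : x = (Submodule.orthogonalProjectionOnto M x : H) := by
        have := sub_eq_zero.mp (hz ▸ h)
        exact this
      rw [this]
      exact (Submodule.orthogonalProjectionOnto M x).2
    have hTz : adjoint T₂ z = 0 := by
      have h1 : (inner ℂ (adjoint T₂ z) (adjoint T₂ z) : ℂ) = 0 := by
        rw [adjoint_inner_left]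
        have hmem : T₂ (adjoint T₂ z) ∈ M := ⟨adjoint T₂ z, hred₂ z hzW, rfl⟩
        exact (Submodule.mem_orthogonal' M z).mp hzorth _ hmem
      exact inner_self_eq_zero.mp h1
    intro hbot
    apply hzne
    have : z ∈ W ⊓ LinearMap.ker (adjoint T₂ : H →ₗ[ℂ] H) := ⟨hzW, hTz⟩
    rw [hbot] at this
    exact this
end

section
/- Let (T₁,…,Tₙ) be a commuting tuple of weighted multishifts on H = ⊕_{α∈ℤ_{≥0}ⁿ} H_α with invertible bounded operator weights A^{(j)}_α (so Tⱼ(⊕ x_α) = ⊕ A^{(j)}_{α−εⱼ} x_{α−εⱼ}, where commutativity is equivalent to A^{(j)}_{α+εᵢ}A^{(i)}_α = A^{(i)}_{α+εⱼ}A^{(j)}_α for all α, i, j). Then the tuple is left-inverse commuting: LᵢTⱼ = TⱼLᵢ for all i ≠ j, where Lᵢ(⊕ x_α) = ⊕ (A^{(i)}_α)⁻¹ x_{α+εᵢ} is the left inverse of Tᵢ with ker Lᵢ = ker Tᵢ*. -/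
open ContinuousLinearMap

/-- A commuting tuple of weighted multishifts on
`H = ⊕_{α ∈ ℤ_{≥0}ⁿ} H_α` (here realized as `lp` over the index set `Fin n → ℕ`) with
invertible bounded operator weights `A^{(j)}_α` is left-inverse commuting:
`Lᵢ Tⱼ = Tⱼ Lᵢ` for `i ≠ j`, where `Lᵢ(⊕ x_α) = ⊕ (A^{(i)}_α)⁻¹ x_{α+εᵢ}` is a left
inverse of `Tᵢ` with `ker Lᵢ = ker Tᵢ*`. -/
theorem stmt_19 {G : Type*} [NormedAddCommGroup G] [InnerProductSpace ℂ G] [CompleteSpace G]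
    {n : ℕ}
    (A : Fin n → (Fin n → ℕ) → (G ≃L[ℂ] G))
    (T L : Fin n → (lp (fun _ : Fin n → ℕ => G) 2 →L[ℂ] lp (fun _ : Fin n → ℕ => G) 2))
    (hT : ∀ (j : Fin n) (x : lp (fun _ : Fin n → ℕ => G) 2) (α : Fin n → ℕ),
      (T j x) α = if 1 ≤ α j then A j (α - Pi.single j 1) (x (α - Pi.single j 1)) else 0)
    (hL : ∀ (i : Fin n) (x : lp (fun _ : Fin n → ℕ => G) 2) (α : Fin n → ℕ),
      (L i x) α = (A i α).symm (x (α + Pi.single i 1)))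
    (hcommW : ∀ (i j : Fin n) (α : Fin n → ℕ) (v : G),
      A j (α + Pi.single i 1) (A i α v) = A i (α + Pi.single j 1) (A j α v)) :
    (∀ i j, i ≠ j → L i ∘L T j = T j ∘L L i) ∧
    (∀ i, L i ∘L T i = 1) ∧
    (∀ i, LinearMap.ker (L i).toLinearMap = LinearMap.ker (adjoint (T i)).toLinearMap) := by
  refine ⟨?_, ?_, ?_⟩
  · -- left-inverse commuting
    intro i j hij
    ext x α
    rw [ContinuousLinearMap.comp_apply, ContinuousLinearMap.comp_apply, hL, hT, hT]
    have hαj : ((α + Pi.single i 1 : Fin n → ℕ)) j = α j := by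
      simp [Pi.single_apply, hij.symm]
    rw [hαj]
    by_cases h : 1 ≤ α j
    · rw [if_pos h, if_pos h, hL]
      have harg : α + Pi.single i 1 - Pi.single j 1
          = (α - Pi.single j 1) + Pi.single i 1 := by
        funext k
        simp only [Pi.add_apply, Pi.sub_apply, Pi.single_apply]
        by_cases hk : k = i
        · subst hk; simp [hij]
        · by_cases hk' : k = j <;> simp [hk, hk'] <;> omega
      rw [harg]
      set β := α - Pi.single j 1 with hβ
      have hαβ : α = β + Pi.single j 1 := by
        funext k
        simp only [hβ, Pi.add_apply, Pi.sub_apply, Pi.single_apply]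
        by_cases hk : k = j <;> simp [hk] <;> omega
      set v := x (β + Pi.single i 1) with hv
      have key := hcommW i j β ((A i β).symm v)
      rw [(A i β).apply_symm_apply] at key
      rw [hαβ, key, (A i (β + Pi.single j 1)).symm_apply_apply]
    · rw [if_neg h, if_neg h, map_zero]
  · -- left inverse
    intro i
    ext x α
    rw [ContinuousLinearMap.comp_apply, hL, hT]
    have h1 : 1 ≤ ((α + Pi.single i 1 : Fin n → ℕ)) i := by simp
    rw [if_pos h1]
    have harg : α + Pi.single i 1 - Pi.single i 1 = α := by
      funext k
      by_cases hk : k = i <;> simp [Pi.single_apply, hk]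
    rw [harg, (A i α).symm_apply_apply, ContinuousLinearMap.one_apply]
  · -- kernels
    intro i
    ext x
    simp only [LinearMap.mem_ker, ContinuousLinearMap.coe_coe]
    have hkerL : L i x = 0 ↔ ∀ α : Fin n → ℕ, x (α + Pi.single i 1) = 0 := by
      constructor
      · intro h α
        have h0 : (L i x : (Fin n → ℕ) → G) α = 0 := by rw [h]; rfl
        rw [hL] at h0
        simpa using (A i α).symm.map_eq_zero_iff.mp h0
      · intro h
        apply lp.ext
        funext α
        rw [hL, h α]
        simp
    -- compute T i on single vectors
    have hTsingle : ∀ (β : Fin n → ℕ) (v : G),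
        T i (lp.single 2 β v) = lp.single 2 (β + Pi.single i 1) (A i β v) := by
      intro β v
      apply lp.ext
      funext α
      rw [hT]
      by_cases h : 1 ≤ α i
      · rw [if_pos h]
        by_cases hαβ : α = β + Pi.single i 1
        · subst hαβ
          have harg : β + Pi.single i 1 - Pi.single i 1 = β := by
            funext k
            by_cases hk : k = i <;> simp [Pi.single_apply, hk]
          rw [harg, lp.single_apply_self, lp.single_apply_self]
        · have hne : α - Pi.single i 1 ≠ β := by
            intro hc
            apply hαβ
            funext k
            have := congrFun hc k
            simp only [Pi.sub_apply, Pi.single_apply] at this ⊢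
            by_cases hk : k = i <;> simp [hk] at this ⊢ <;> omega
          rw [lp.single_apply_ne _ _ _ hne, lp.single_apply_ne _ _ _ hαβ, map_zero]
      · rw [if_neg h]
        have hne : α ≠ β + Pi.single i 1 := by
          intro hc
          apply h
          rw [hc]
          simp
        rw [lp.single_apply_ne _ _ _ hne]
    have hkerA : adjoint (T i) x = 0 ↔ ∀ α : Fin n → ℕ, x (α + Pi.single i 1) = 0 := by
      constructor
      · intro h β
        have h1 : (inner ℂ (T i (lp.single 2 β ((A i β).symm (x (β + Pi.single i 1))))) x : ℂ)
            = inner ℂ (lp.single 2 β ((A i β).symm (x (β + Pi.single i 1)))) (adjoint (T i) x) :=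
          (ContinuousLinearMap.adjoint_inner_right (T i) _ _).symm
        rw [h, inner_zero_right, hTsingle, lp.inner_single_left,
          (A i β).apply_symm_apply] at h1
        exact inner_self_eq_zero.mp h1
      · intro h
        have : ∀ y, (inner ℂ (adjoint (T i) x) y : ℂ) = inner ℂ (0 : lp (fun _ : Fin n → ℕ => G) 2) y := by
          intro y
          rw [inner_zero_left, ContinuousLinearMap.adjoint_inner_left]
          rw [lp.inner_eq_tsum]
          have hterm : ∀ α : Fin n → ℕ, (inner ℂ (x α) ((T i y) α) : ℂ) = 0 := by
            intro α
            by_cases hα : 1 ≤ α i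
            · have hαeq : α = (α - Pi.single i 1) + Pi.single i 1 := by
                funext k
                simp only [Pi.add_apply, Pi.sub_apply, Pi.single_apply]
                by_cases hk : k = i <;> simp [hk] <;> omega
              rw [hαeq, h, inner_zero_left]
            · rw [hT, if_neg hα, inner_zero_right]
          simp only [hterm, tsum_zero]
        exact ext_inner_right ℂ this
    rw [hkerL, hkerA]
end
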